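/- Let ξ > 0, N ∈ ℕ with N ≥ 1, and a ∈ ℝ with |a| < 1. Define the matrix A ∈ M_N(ℝ) by A_{i,m} := (1 − e^{−ξ}) e^{−(i−m)ξ} a for 1 ≤ m ≤ i, A_{i,m} := 0 for i < m < N, together with an additional term e^{−iξ} in the last column, i.e. A_{i,N} := e^{−iξ} + (1 − e^{−ξ}) e^{−(i−N)ξ} a · 1_{{N ≤ i}}. Then the row-sum matrix norm satisfies ‖A‖_∞ := max_{1≤i≤N} Σ_{m=1}^N |A_{i,m}| < 1. -/
import Mathlib


/-- For `ξ > 0`, `N ≥ 1`, `|a| < 1`, the TDR connectivity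
matrix `A` with entries (in 1-based notation)
`A_{i,m} = (1 − e^{−ξ}) e^{−(i−m)ξ} a` for `1 ≤ m ≤ i`, `A_{i,m} = 0` for
`i < m < N`, plus the extra term `e^{−iξ}` in the last column, satisfies
`‖A‖_∞ = max_i Σ_m |A_{i,m}| < 1` (equivalently, every absolute row sum is
`< 1`).  Below indices are 0-based: row `i` and column `m` of the statement
correspond to `i.val + 1` and `m.val + 1`. -/
theorem tdr_connectivity_matrix_norm_lt_one
    (ξ : ℝ) (hξ : 0 < ξ) (N : ℕ) (hN : 1 ≤ N) (a : ℝ) (ha : |a| < 1)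
    (A : Matrix (Fin N) (Fin N) ℝ)
    (hA : ∀ i m : Fin N,
      A i m = (if m.val ≤ i.val then
                  (1 - Real.exp (-ξ)) * Real.exp (-((i.val - m.val : ℕ) : ℝ) * ξ) * a
                else 0)
              + (if m.val + 1 = N then Real.exp (-((i.val + 1 : ℕ) : ℝ) * ξ) else 0)) :
    ∀ i : Fin N, ∑ m : Fin N, |A i m| < 1 := by
  intro i
  set r := Real.exp (-ξ) with hr
  have hr0 : 0 < r := Real.exp_pos _
  have hr1 : r < 1 := by
    rw [hr, Real.exp_lt_one_iff]; linarith
  have hexp : ∀ k : ℕ, Real.exp (-(k : ℝ) * ξ) = r ^ k := by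
    intro k
    rw [hr, ← Real.exp_nat_mul]
    ring_nf
  set E := r ^ (i.val + 1) with hE
  have hE0 : 0 < E := pow_pos hr0 _
  have hE1 : E < 1 := pow_lt_one₀ (le_of_lt hr0) hr1 (by omega)
  have hbound : ∀ m : Fin N, |A i m| ≤
      (if m.val ≤ i.val then (1 - r) * r ^ (i.val - m.val) * |a| else 0)
      + (if m.val + 1 = N then E else 0) := by
    intro m
    rw [hA]
    refine le_trans (abs_add_le _ _) (add_le_add ?_ ?_)
    · split_ifs with h
      · rw [hexp, abs_mul, abs_mul, abs_of_pos (by linarith : (0:ℝ) < 1 - r),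
          abs_of_pos (pow_pos hr0 _)]
      · simp
    · split_ifs with h
      · rw [hexp]
        exact le_of_eq (abs_of_pos (pow_pos hr0 _))
      · simp
  have hsum := Finset.sum_le_sum (fun m (_ : m ∈ Finset.univ) => hbound m)
  rw [Finset.sum_add_distrib] at hsum
  -- second sum equals E
  have mN : Fin N := ⟨N - 1, by omega⟩
  have hS2 : ∑ m : Fin N, (if m.val + 1 = N then E else 0) = E := by
    rw [Finset.sum_eq_single (⟨N - 1, by omega⟩ : Fin N)]
    · rw [if_pos (show ((⟨N - 1, by omega⟩ : Fin N) : ℕ) + 1 = N by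
        simp only [Fin.val_mk]; omega)]
    · intro b _ hb
      rw [if_neg]
      intro h
      exact hb (Fin.ext (by simp only [Fin.val_mk]; omega))
    · intro h
      exact absurd (Finset.mem_univ _) h
  -- first sum
  have hS1 : ∑ m : Fin N, (if m.val ≤ i.val then (1 - r) * r ^ (i.val - m.val) * |a| else 0)
      = |a| * (1 - E) := by
    rw [Fin.sum_univ_eq_sum_range
      (fun m => if m ≤ i.val then (1 - r) * r ^ (i.val - m) * |a| else 0)]
    rw [← Finset.sum_subset (Finset.range_subset_range.mpr (by omega : i.val + 1 ≤ N))
        (by intro x _ hx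
            rw [Finset.mem_range, not_lt] at hx
            rw [if_neg]; omega)]
    have hrefl := Finset.sum_range_reflect
      (fun m => if m ≤ i.val then (1 - r) * r ^ (i.val - m) * |a| else 0) (i.val + 1)
    rw [← hrefl]
    have : ∀ j ∈ Finset.range (i.val + 1),
        (fun m => if m ≤ i.val then (1 - r) * r ^ (i.val - m) * |a| else 0) (i.val + 1 - 1 - j)
        = (1 - r) * |a| * r ^ j := by
      intro j hj
      rw [Finset.mem_range] at hj
      simp only []
      rw [if_pos (by omega)]
      have : i.val - (i.val + 1 - 1 - j) = j := by omega
      rw [this]; ring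
    rw [Finset.sum_congr rfl this, ← Finset.mul_sum]
    have hg := geom_sum_mul r (i.val + 1)
    have : (1 - r) * ∑ j ∈ Finset.range (i.val + 1), r ^ j = 1 - E := by
      rw [hE]; linarith [hg]
    nlinarith [this]
  rw [hS1, hS2] at hsum
  have : |a| * (1 - E) + E < 1 := by nlinarith [mul_pos (sub_pos.2 ha) (sub_pos.2 hE1)]
  linarith
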